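/- A feasible flow f in a flow network is of minimum cost if and only if the residual network G_f contains no directed cycle of negative total cost. -/

import Mathlib

open Finset

/-- A flow network: directed arcs with costs, capacities (possibly infinite),
lower bounds and vertex balances. -/
structure Network (V E : Type) where
  src : E → V
  dst : E → V
  cost : E → ℝ
  cap : E → WithTop ℝ
  low : E → ℝ
  bal : V → ℝ

variable {V E : Type}

def outflow [Fintype E] [DecidableEq V] (N : Network V E) (f : E → ℝ) (v : V) : ℝ :=
  ∑ e, if N.src e = v then f e else 0

def inflow [Fintype E] [DecidableEq V] (N : Network V E) (f : E → ℝ) (v : V) : ℝ :=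
  ∑ e, if N.dst e = v then f e else 0

/-- `f` obeys lower bounds and capacities. -/
def RespectsCap (N : Network V E) (f : E → ℝ) : Prop :=
  ∀ e, N.low e ≤ f e ∧ (f e : WithTop ℝ) ≤ N.cap e

/-- Feasible flow: capacity constraints and balance constraints. -/
def Feasible [Fintype E] [DecidableEq V] (N : Network V E) (f : E → ℝ) : Prop :=
  RespectsCap N f ∧ ∀ v, outflow N f v - inflow N f v = N.bal v

def flowCost [Fintype E] (N : Network V E) (f : E → ℝ) : ℝ := ∑ e, N.cost e * f e

/-- Excess of a vertex: `b(v) + inflow - outflow`. -/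
def excess [Fintype E] [DecidableEq V] (N : Network V E) (f : E → ℝ) (v : V) : ℝ :=
  N.bal v + inflow N f v - outflow N f v

/-- Residual steps: `Sum.inl e` is the forward residual arc of `e`,
`Sum.inr e` the backward (reverse) residual arc. -/
def stepTail (N : Network V E) : E ⊕ E → V := Sum.elim N.src N.dst
def stepHead (N : Network V E) : E ⊕ E → V := Sum.elim N.dst N.src
def stepCost (N : Network V E) : E ⊕ E → ℝ := Sum.elim N.cost (fun e => -N.cost e)

/-- A residual step is present in the residual network `G_f`. -/
def StepOk (N : Network V E) (f : E → ℝ) : E ⊕ E → Prop :=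
  Sum.elim (fun e => (f e : WithTop ℝ) < N.cap e) (fun e => N.low e < f e)

def listCost (N : Network V E) (L : List (E ⊕ E)) : ℝ := (L.map (stepCost N)).sum

/-- A (closed) directed cycle in the residual network `G_f`. -/
def IsResidCycle (N : Network V E) (f : E → ℝ) (L : List (E ⊕ E)) : Prop :=
  L ≠ [] ∧ (∀ d ∈ L, StepOk N f d) ∧
  L.Chain' (fun a b => stepHead N a = stepTail N b) ∧
  L.getLast?.map (stepHead N) = L.head?.map (stepTail N)

/-- The residual network contains no negative-cost cycle. -/
def NoNegCycle (N : Network V E) (f : E → ℝ) : Prop :=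
  ∀ L, IsResidCycle N f L → 0 ≤ listCost N L

/-- A directed path from `s` to `t` in the residual network `G_f`. -/
def IsResidPath (N : Network V E) (f : E → ℝ) (s t : V) (L : List (E ⊕ E)) : Prop :=
  (∀ d ∈ L, StepOk N f d) ∧
  L.Chain' (fun a b => stepHead N a = stepTail N b) ∧
  L.head?.map (stepTail N) = some s ∧ L.getLast?.map (stepHead N) = some t


open scoped Classical

section Helpers

variable [Fintype V] [Fintype E] [DecidableEq V]


/-- Classical occurrence count in a list. -/
noncomputable def cnt {α : Type} (s : α) : List α → ℕ
  | [] => 0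
  | a :: L => cnt s L + if a = s then 1 else 0

lemma cnt_cons {α : Type} (s a : α) (L : List α) :
    cnt s (a :: L) = cnt s L + if a = s then 1 else 0 := rfl

lemma cnt_eq_zero_of_not_mem {α : Type} {s : α} {L : List α} (h : s ∉ L) :
    cnt s L = 0 := by
  induction L with
  | nil => rfl
  | cons a L ih =>
    rw [cnt_cons, if_neg (by rintro rfl; exact h List.mem_cons_self),
      ih (fun hs => h (List.mem_cons_of_mem a hs))]

lemma cnt_eq_one_of_nodup_mem {α : Type} {s : α} {L : List α}
    (hnd : L.Nodup) (h : s ∈ L) : cnt s L = 1 := by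
  induction L with
  | nil => simp at h
  | cons a L ih =>
    rw [cnt_cons]
    rcases List.mem_cons.mp h with rfl | hs
    · rw [if_pos rfl, cnt_eq_zero_of_not_mem (List.nodup_cons.mp hnd).1]
    · rw [if_neg (by rintro rfl; exact (List.nodup_cons.mp hnd).1 hs),
        ih (List.nodup_cons.mp hnd).2 hs]

lemma cnt_le_length {α : Type} (s : α) (L : List α) : cnt s L ≤ L.length := by
  induction L with
  | nil => exact le_refl 0
  | cons a L ih =>
    rw [cnt_cons, List.length_cons]
    split_ifs <;> omega

/-- Signed multiplicity of arc `e` in a residual step list. -/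
noncomputable def chi (L : List (E ⊕ E)) (e : E) : ℝ :=
  (cnt (Sum.inl e) L : ℝ) - (cnt (Sum.inr e) L : ℝ)

lemma sum_list_eq_sum_count (w : E ⊕ E → ℝ) (L : List (E ⊕ E)) :
    (L.map w).sum =
      ∑ e : E, (((cnt (Sum.inl e) L : ℝ)) * w (Sum.inl e)
        + ((cnt (Sum.inr e) L : ℝ)) * w (Sum.inr e)) := by
  induction L with
  | nil => simp [cnt]
  | cons d L ih =>
    have key : ∀ e : E,
        ((cnt (Sum.inl e) (d :: L) : ℕ) : ℝ) * w (Sum.inl e)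
          + ((cnt (Sum.inr e) (d :: L) : ℕ) : ℝ) * w (Sum.inr e)
        = ((cnt (Sum.inl e) L : ℝ) * w (Sum.inl e)
            + (cnt (Sum.inr e) L : ℝ) * w (Sum.inr e))
          + ((if d = Sum.inl e then w (Sum.inl e) else 0)
            + (if d = Sum.inr e then w (Sum.inr e) else 0)) := by
      intro e
      rw [cnt_cons, cnt_cons]
      push_cast
      split_ifs <;> simp_all <;> ring
    rw [List.map_cons, List.sum_cons, ih,
      Finset.sum_congr rfl fun e _ => key e]
    have hd : ∑ e : E, ((if d = Sum.inl e then w (Sum.inl e) else 0)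
        + (if d = Sum.inr e then w (Sum.inr e) else 0)) = w d := by
      cases d with
      | inl a =>
        rw [Finset.sum_add_distrib]
        simp [Finset.sum_ite_eq Finset.univ a]
      | inr a =>
        rw [Finset.sum_add_distrib]
        simp [Finset.sum_ite_eq Finset.univ a]
    conv_rhs => rw [Finset.sum_add_distrib]
    rw [hd]
    ring

lemma chain_sum_indicator (N : Network V E) (v : V) :
    ∀ (L : List (E ⊕ E)) (s t : V),
      L.Chain' (fun a b => stepHead N a = stepTail N b) →
      L.head?.map (stepTail N) = some s →
      L.getLast?.map (stepHead N) = some t →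
      (L.map (fun d => (if stepTail N d = v then (1:ℝ) else 0)
          - (if stepHead N d = v then (1:ℝ) else 0))).sum
        = (if s = v then (1:ℝ) else 0) - (if t = v then (1:ℝ) else 0) := by
  intro L
  induction L with
  | nil => intro s t _ h; simp at h
  | cons d L ih =>
    intro s t hc hh hl
    cases L with
    | nil =>
      simp only [List.head?_cons, Option.map_some] at hh hl
      simp only [List.getLast?_singleton, Option.map_some] at hl
      simp [Option.some.injEq] at hh hl
      simp [hh, hl]
    | cons d' L' =>
      have hc' : (d' :: L').Chain' (fun a b => stepHead N a = stepTail N b) :=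
        (List.isChain_cons_cons.mp hc).2
      have hdd' : stepHead N d = stepTail N d' := (List.isChain_cons_cons.mp hc).1
      have hlast : (d :: d' :: L').getLast? = (d' :: L').getLast? := by
        rw [List.getLast?_cons_cons]
      rw [hlast] at hl
      have := ih (stepTail N d') t hc' (by simp) hl
      simp only [List.map_cons, List.sum_cons] at this ⊢
      simp only [List.head?_cons, Option.map_some, Option.some.injEq] at hh
      rw [this, ← hh, hdd']
      ring

lemma closed_chain_sum_indicator (N : Network V E) (v : V) (L : List (E ⊕ E))
    (hne : L ≠ []) (hc : L.Chain' (fun a b => stepHead N a = stepTail N b))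
    (hcl : L.getLast?.map (stepHead N) = L.head?.map (stepTail N)) :
    (L.map (fun d => (if stepTail N d = v then (1:ℝ) else 0)
        - (if stepHead N d = v then (1:ℝ) else 0))).sum = 0 := by
  obtain ⟨s, hs⟩ : ∃ s, L.head?.map (stepTail N) = some s := by
    cases L with
    | nil => exact absurd rfl hne
    | cons a L => exact ⟨stepTail N a, by simp⟩
  rw [chain_sum_indicator N v L s s hc hs (by rw [hcl, hs]), sub_self]

lemma chi_cost (N : Network V E) (L : List (E ⊕ E)) :
    ∑ e, N.cost e * chi L e = listCost N L := by
  rw [listCost, sum_list_eq_sum_count (stepCost N) L]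
  refine Finset.sum_congr rfl fun e _ => ?_
  simp [chi, stepCost]
  ring

lemma chi_div (N : Network V E) (L : List (E ⊕ E))
    (hne : L ≠ []) (hc : L.Chain' (fun a b => stepHead N a = stepTail N b))
    (hcl : L.getLast?.map (stepHead N) = L.head?.map (stepTail N)) (v : V) :
    outflow N (chi L) v = inflow N (chi L) v := by
  have key := closed_chain_sum_indicator N v L hne hc hcl
  rw [sum_list_eq_sum_count
    (fun d => (if stepTail N d = v then (1:ℝ) else 0)
      - (if stepHead N d = v then (1:ℝ) else 0)) L] at key
  have h2 : outflow N (chi L) v - inflow N (chi L) v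
      = ∑ e : E, ((cnt (Sum.inl e) L : ℝ)
            * ((if stepTail N (Sum.inl e) = v then (1:ℝ) else 0)
              - (if stepHead N (Sum.inl e) = v then (1:ℝ) else 0))
          + (cnt (Sum.inr e) L : ℝ)
            * ((if stepTail N (Sum.inr e) = v then (1:ℝ) else 0)
              - (if stepHead N (Sum.inr e) = v then (1:ℝ) else 0))) := by
    rw [outflow, inflow, ← Finset.sum_sub_distrib]
    refine Finset.sum_congr rfl fun e _ => ?_
    simp only [chi, stepTail, stepHead, Sum.elim_inl, Sum.elim_inr]
    split_ifs <;> simp [*] <;> ring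
  rw [key] at h2
  linarith

lemma outflow_add_smul (N : Network V E) (c : ℝ) (x y : E → ℝ) (v : V) :
    outflow N (fun e => x e + c * y e) v = outflow N x v + c * outflow N y v := by
  simp only [outflow, Finset.mul_sum, ← Finset.sum_add_distrib]
  refine Finset.sum_congr rfl fun e _ => ?_
  split_ifs <;> ring

lemma inflow_add_smul (N : Network V E) (c : ℝ) (x y : E → ℝ) (v : V) :
    inflow N (fun e => x e + c * y e) v = inflow N x v + c * inflow N y v := by
  simp only [inflow, Finset.mul_sum, ← Finset.sum_add_distrib]
  refine Finset.sum_congr rfl fun e _ => ?_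
  split_ifs <;> ring

/-- From a divergence-free nonzero `d`, extract a simple cycle supported on `d`. -/
lemma exists_support_cycle (N : Network V E) (d : E → ℝ)
    (hdiv : ∀ v, outflow N d v = inflow N d v) (e₀ : E) (h0 : d e₀ ≠ 0) :
    ∃ L : List (E ⊕ E), L ≠ [] ∧ L.Nodup ∧
      (∀ s ∈ L, Sum.elim (fun e => 0 < d e) (fun e => d e < 0) s) ∧
      L.Chain' (fun a b => stepHead N a = stepTail N b) ∧
      L.getLast?.map (stepHead N) = L.head?.map (stepTail N) := by
  set Ok : E ⊕ E → Prop := Sum.elim (fun e => 0 < d e) (fun e => d e < 0) with hOk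
  -- every Ok step can be continued
  have step_exists : ∀ s : E ⊕ E, Ok s → ∃ s', Ok s' ∧ stepTail N s' = stepHead N s := by
    intro s hs
    set w := stepHead N s with hw
    have hzero : (∑ e, if N.src e = w then d e else 0) - (∑ e, if N.dst e = w then d e else 0)
        = 0 := by
      have := hdiv w
      rw [outflow, inflow] at this
      linarith
    have hsplit :
        (∑ e, if N.dst e = w then max (d e) 0 else 0)
          + (∑ e, if N.src e = w then max (-(d e)) 0 else 0)
        = (∑ e, if N.src e = w then max (d e) 0 else 0)
          + (∑ e, if N.dst e = w then max (-(d e)) 0 else 0) := by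
      have expand : ∀ x : ℝ, max x 0 - max (-x) 0 = x := fun x =>
        max_zero_sub_max_neg_zero_eq_self x
      have h1 : (∑ e, if N.src e = w then max (d e) 0 else 0)
          - (∑ e, if N.src e = w then max (-(d e)) 0 else 0)
          = ∑ e, if N.src e = w then d e else 0 := by
        rw [← Finset.sum_sub_distrib]
        refine Finset.sum_congr rfl fun e _ => ?_
        split_ifs with h
        · exact expand (d e)
        · ring
      have h2 : (∑ e, if N.dst e = w then max (d e) 0 else 0)
          - (∑ e, if N.dst e = w then max (-(d e)) 0 else 0)
          = ∑ e, if N.dst e = w then d e else 0 := by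
        rw [← Finset.sum_sub_distrib]
        refine Finset.sum_congr rfl fun e _ => ?_
        split_ifs with h
        · exact expand (d e)
        · ring
      linarith
    have hpos : 0 < (∑ e, if N.dst e = w then max (d e) 0 else 0)
        + (∑ e, if N.src e = w then max (-(d e)) 0 else 0) := by
      have nn1 : 0 ≤ ∑ e, if N.dst e = w then max (d e) 0 else 0 :=
        Finset.sum_nonneg fun e _ => by positivity
      have nn2 : 0 ≤ ∑ e, if N.src e = w then max (-(d e)) 0 else 0 :=
        Finset.sum_nonneg fun e _ => by positivity
      cases s with
      | inl a =>
        have ha : 0 < d a := hs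
        have hwa : N.dst a = w := by simp [hw, stepHead]
        have : 0 < ∑ e, if N.dst e = w then max (d e) 0 else 0 := by
          refine Finset.sum_pos' (fun e _ => by positivity) ⟨a, Finset.mem_univ a, ?_⟩
          simp [hwa, lt_max_iff, ha]
        linarith
      | inr a =>
        have ha : d a < 0 := hs
        have hwa : N.src a = w := by simp [hw, stepHead]
        have : 0 < ∑ e, if N.src e = w then max (-(d e)) 0 else 0 := by
          refine Finset.sum_pos' (fun e _ => by positivity) ⟨a, Finset.mem_univ a, ?_⟩
          simp [hwa, lt_max_iff]
          linarith
        linarith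
    rw [hsplit] at hpos
    rcases lt_or_ge 0 (∑ e, if N.src e = w then max (d e) 0 else 0) with h | h
    · obtain ⟨a, _, ha⟩ := Finset.exists_ne_zero_of_sum_ne_zero (ne_of_gt h)
      by_cases hsw : N.src a = w
      · simp only [hsw, if_true] at ha
        have : 0 < d a := by
          rcases lt_trichotomy (d a) 0 with h' | h' | h'
          · exact absurd (by simp [max_eq_right h'.le]) ha
          · exact absurd (by simp [h']) ha
          · exact h'
        exact ⟨Sum.inl a, this, by simp [stepTail, hsw]⟩
      · simp [hsw] at ha
    · have h2 : 0 < ∑ e, if N.dst e = w then max (-(d e)) 0 else 0 := by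
        have nn1 : 0 ≤ ∑ e, if N.src e = w then max (d e) 0 else 0 :=
          Finset.sum_nonneg fun e _ => by positivity
        linarith
      obtain ⟨a, _, ha⟩ := Finset.exists_ne_zero_of_sum_ne_zero (ne_of_gt h2)
      by_cases hsw : N.dst a = w
      · simp only [hsw, if_true] at ha
        have : d a < 0 := by
          rcases lt_trichotomy (d a) 0 with h' | h' | h'
          · exact h'
          · exact absurd (by simp [h']) ha
          · exact absurd (by simp [max_eq_right (by linarith : -(d a) ≤ 0)]) ha
        exact ⟨Sum.inr a, this, by simp [stepTail, hsw]⟩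
      · simp [hsw] at ha
  -- build an infinite walk
  have hs0 : ∃ s : E ⊕ E, Ok s := by
    rcases lt_or_gt_of_ne h0 with h | h
    · exact ⟨Sum.inr e₀, h⟩
    · exact ⟨Sum.inl e₀, h⟩
  obtain ⟨s0, hs0⟩ := hs0
  let F : {s : E ⊕ E // Ok s} → {s : E ⊕ E // Ok s} := fun s =>
    ⟨Classical.choose (step_exists s.1 s.2), (Classical.choose_spec (step_exists s.1 s.2)).1⟩
  have hF : ∀ s : {s : E ⊕ E // Ok s}, stepTail N (F s).1 = stepHead N s.1 := fun s =>
    (Classical.choose_spec (step_exists s.1 s.2)).2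
  set walk : ℕ → {s : E ⊕ E // Ok s} := fun n => F^[n] ⟨s0, hs0⟩ with hwalk
  have hchain : ∀ n, stepHead N (walk n).1 = stepTail N (walk (n+1)).1 := by
    intro n
    have : walk (n+1) = F (walk n) := by
      rw [hwalk]; exact Function.iterate_succ_apply' F n _
    rw [this, hF]
  set t : ℕ → V := fun n => stepTail N (walk n).1 with ht
  have hP : ∃ j, ∃ i, i < j ∧ t i = t j := by
    obtain ⟨a, b, hab, heq⟩ := Finite.exists_ne_map_eq_of_infinite t
    rcases lt_or_gt_of_ne hab with h | h
    · exact ⟨b, a, h, heq⟩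
    · exact ⟨a, b, h, heq.symm⟩
  classical
  set j := Nat.find hP with hj
  obtain ⟨i, hij, hteq⟩ := Nat.find_spec hP
  have hmin : ∀ k < j, ¬ ∃ i, i < k ∧ t i = t k := fun k hk => Nat.find_min hP hk
  refine ⟨(List.range (j - i)).map (fun k => (walk (i + k)).1), ?_, ?_, ?_, ?_, ?_⟩
  · simp [List.range_eq_nil]
    omega
  · -- Nodup: tails are distinct
    refine List.Nodup.of_map (stepTail N) ?_
    rw [List.map_map]
    have : (stepTail N ∘ fun k => (walk (i + k)).1) = fun k => t (i + k) := rfl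
    rw [this]
    rw [List.nodup_map_iff_inj_on List.nodup_range]
    intro k hk l hl hkl
    simp only [List.mem_range] at hk hl
    by_contra hne
    rcases Nat.lt_or_ge k l with h | h
    · exact hmin (i + l) (by omega) ⟨i + k, by omega, hkl⟩
    · have h' : l < k := by omega
      exact hmin (i + k) (by omega) ⟨i + l, by omega, hkl.symm⟩
  · intro s hsL
    simp only [List.mem_map] at hsL
    obtain ⟨k, _, hk⟩ := hsL
    rw [← hk]
    exact (walk (i + k)).2
  · unfold List.Chain'
    rw [List.isChain_map]
    have hd : j - i = (j - i - 1) + 1 := by omega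
    rw [hd, List.isChain_range_succ]
    intro m hm
    have : i + (m + 1) = (i + m) + 1 := by omega
    rw [this]
    exact hchain (i + m)
  · have hd : j - i = (j - i - 1) + 1 := by omega
    have hr : List.range (j - i) = List.range (j - i - 1) ++ [j - i - 1] := by
      rw [hd]; simp [List.range_succ]
    have hlast : ((List.range (j - i)).map (fun k => (walk (i + k)).1)).getLast?
        = some (walk (i + (j - i - 1))).1 := by
      rw [hr, List.map_append]
      simp only [List.map_cons, List.map_nil]
      exact List.getLast?_concat
    have hhead : ((List.range (j - i)).map (fun k => (walk (i + k)).1)).head?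
        = some (walk (i + 0)).1 := by
      rw [hd, List.range_succ_eq_map]
      simp
    rw [hlast, hhead]
    simp only [Option.map_some, Option.some.injEq]
    have h1 : i + (j - i - 1) + 1 = j := by omega
    have h2 := hchain (i + (j - i - 1))
    rw [h1] at h2
    rw [h2]
    show t j = t (i + 0)
    rw [← hteq]
    simp

/-- Key lemma: a residual circulation has nonnegative cost when
there is no negative residual cycle. -/
lemma circ_cost_nonneg (N : Network V E) (f : E → ℝ) (hnn : NoNegCycle N f) :
    ∀ n (d : E → ℝ), (Finset.univ.filter fun e => d e ≠ 0).card ≤ n →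
      (∀ e, (0 < d e → (f e : WithTop ℝ) < N.cap e) ∧ (d e < 0 → N.low e < f e)) →
      (∀ v, outflow N d v = inflow N d v) →
      0 ≤ ∑ e, N.cost e * d e := by
  intro n
  induction n with
  | zero =>
    intro d hcard _ _
    have : ∀ e, d e = 0 := by
      intro e
      by_contra h
      have : e ∈ Finset.univ.filter fun e => d e ≠ 0 := by simp [h]
      have := Finset.card_pos.mpr ⟨e, this⟩
      omega
    simp [this]
  | succ n ih =>
    intro d hcard hsign hdiv
    classical
    by_cases hz : ∀ e, d e = 0
    · simp [hz]
    push_neg at hz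
    obtain ⟨e₀, he₀⟩ := hz
    obtain ⟨L, hne, hnd, hok, hch, hclosed⟩ := exists_support_cycle N d hdiv e₀ he₀
    -- L is a residual cycle of f
    have hres : IsResidCycle N f L := by
      refine ⟨hne, fun s hs => ?_, hch, hclosed⟩
      cases s with
      | inl a => exact (hsign a).1 (hok _ hs)
      | inr a => exact (hsign a).2 (hok _ hs)
    have hcost := hnn L hres
    -- the minimum residual amount along L
    have hLfin : L.toFinset.Nonempty := by
      cases L with
      | nil => exact absurd rfl hne
      | cons a L => exact ⟨a, by simp⟩
    set arc : E ⊕ E → E := Sum.elim id id with harc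
    set δ := L.toFinset.inf' hLfin (fun s => |d (arc s)|) with hδ
    have hδ_le : ∀ s ∈ L, δ ≤ |d (arc s)| := fun s hs =>
      Finset.inf'_le _ (List.mem_toFinset.mpr hs)
    have hδ_pos : 0 < δ := by
      obtain ⟨s, hsmem, hseq⟩ := Finset.exists_mem_eq_inf' hLfin (fun s => |d (arc s)|)
      rw [hδ, hseq]
      have := hok s (List.mem_toFinset.mp hsmem)
      cases s with
      | inl a => simp only [harc, Sum.elim_inl, id]; exact abs_pos.mpr (ne_of_gt this)
      | inr a => simp only [harc, Sum.elim_inr, id]; exact abs_pos.mpr (ne_of_lt this)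
    -- trichotomy for chi
    have hchi : ∀ e : E,
        (Sum.inl e ∈ L ∧ chi L e = 1 ∧ Sum.inr e ∉ L) ∨
        (Sum.inr e ∈ L ∧ chi L e = -1 ∧ Sum.inl e ∉ L) ∨
        (chi L e = 0 ∧ Sum.inl e ∉ L ∧ Sum.inr e ∉ L) := by
      intro e
      rcases Classical.em ((Sum.inl e : E ⊕ E) ∈ L) with h1 | h1
      · have hd1 : 0 < d e := hok _ h1
        have h2 : Sum.inr e ∉ L := fun h2 => absurd (hok _ h2) (by simp; linarith)
        left
        refine ⟨h1, ?_, h2⟩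
        rw [chi, cnt_eq_one_of_nodup_mem hnd h1, cnt_eq_zero_of_not_mem h2]
        norm_num
      · rcases Classical.em ((Sum.inr e : E ⊕ E) ∈ L) with h2 | h2
        · right; left
          refine ⟨h2, ?_, h1⟩
          rw [chi, cnt_eq_one_of_nodup_mem hnd h2, cnt_eq_zero_of_not_mem h1]
          norm_num
        · right; right
          refine ⟨?_, h1, h2⟩
          rw [chi, cnt_eq_zero_of_not_mem h1, cnt_eq_zero_of_not_mem h2]
          norm_num
    set d' : E → ℝ := fun e => d e + (-δ) * chi L e with hd'
    -- sign preservation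
    have hsign' : ∀ e, (0 < d' e → 0 < d e) ∧ (d' e < 0 → d e < 0) := by
      intro e
      rcases hchi e with ⟨h1, hc1, _⟩ | ⟨h2, hc2, _⟩ | ⟨hc0, _, _⟩
      · have hd1 : 0 < d e := hok _ h1
        have hle : δ ≤ d e := by
          have := hδ_le _ h1
          simp only [harc, Sum.elim_inl, id] at this
          rwa [abs_of_pos hd1] at this
        constructor
        · intro _; exact hd1
        · intro h; simp only [hd', hc1] at h; linarith
      · have hd2 : d e < 0 := hok _ h2
        have hle : δ ≤ -(d e) := by
          have := hδ_le _ h2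
          simp only [harc, Sum.elim_inr, id] at this
          rwa [abs_of_neg hd2] at this
        constructor
        · intro h; simp only [hd', hc2] at h; linarith
        · intro _; exact hd2
      · simp only [hd', hc0]
        constructor <;> intro h <;> linarith
    -- support strictly decreases
    have hsub : (Finset.univ.filter fun e => d' e ≠ 0) ⊆
        (Finset.univ.filter fun e => d e ≠ 0) := by
      intro e he
      simp only [Finset.mem_filter, Finset.mem_univ, true_and] at he ⊢
      intro h
      rcases hchi e with ⟨h1, _, _⟩ | ⟨h2, _, _⟩ | ⟨hc0, _, _⟩
      · exact absurd (hok _ h1) (by simp [h])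
      · exact absurd (hok _ h2) (by simp [h])
      · exact he (by simp [hd', hc0, h])
    have hstrict : ∃ e, e ∈ (Finset.univ.filter fun e => d e ≠ 0) ∧
        e ∉ (Finset.univ.filter fun e => d' e ≠ 0) := by
      obtain ⟨s, hsmem, hseq⟩ := Finset.exists_mem_eq_inf' hLfin (fun s => |d (arc s)|)
      have hsL := List.mem_toFinset.mp hsmem
      cases s with
      | inl a =>
        have hda : 0 < d a := hok _ hsL
        have hca : chi L a = 1 := by
          rcases hchi a with ⟨_, hc, _⟩ | ⟨_, _, h⟩ | ⟨_, h, _⟩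
          · exact hc
          · exact absurd hsL h
          · exact absurd hsL h
        refine ⟨a, by simp [ne_of_gt hda], ?_⟩
        simp only [Finset.mem_filter, Finset.mem_univ, true_and, not_not]
        have : δ = d a := by
          rw [hδ, hseq]; simp only [harc, Sum.elim_inl, id]; exact abs_of_pos hda
        simp [hd', hca, this]
      | inr a =>
        have hda : d a < 0 := hok _ hsL
        have hca : chi L a = -1 := by
          rcases hchi a with ⟨_, _, h⟩ | ⟨_, hc, _⟩ | ⟨_, _, h⟩
          · exact absurd hsL h
          · exact hc
          · exact absurd hsL h
        refine ⟨a, by simp [ne_of_lt hda], ?_⟩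
        simp only [Finset.mem_filter, Finset.mem_univ, true_and, not_not]
        have : δ = -(d a) := by
          rw [hδ, hseq]; simp only [harc, Sum.elim_inr, id]; exact abs_of_neg hda
        simp [hd', hca, this]
    have hcard' : (Finset.univ.filter fun e => d' e ≠ 0).card ≤ n := by
      obtain ⟨e, he1, he2⟩ := hstrict
      have := Finset.card_lt_card (Finset.ssubset_iff_of_subset hsub |>.mpr ⟨e, he1, he2⟩)
      omega
    -- apply induction hypothesis
    have hrec := ih d' hcard'
      (fun e => ⟨fun h => (hsign e).1 ((hsign' e).1 h), fun h => (hsign e).2 ((hsign' e).2 h)⟩)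
      (fun v => by
        rw [hd']
        rw [outflow_add_smul N (-δ) d (chi L) v, inflow_add_smul N (-δ) d (chi L) v,
          hdiv v, chi_div N L hne hch hclosed v])
    -- cost accounting
    have hsum : ∑ e, N.cost e * d e = (∑ e, N.cost e * d' e) + δ * listCost N L := by
      rw [← chi_cost N L, Finset.mul_sum, ← Finset.sum_add_distrib]
      refine Finset.sum_congr rfl fun e _ => ?_
      simp only [hd']
      ring
    rw [hsum]
    have : 0 ≤ δ * listCost N L := mul_nonneg hδ_pos.le hcost
    linarith

end Helpers

/-- A feasible flow is of minimum cost iff the residual network `G_f`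
contains no directed cycle of negative total cost. -/
theorem stmt12 {V E : Type} [Fintype V] [Fintype E] [DecidableEq V]
    (N : Network V E) (f : E → ℝ) (hf : Feasible N f) :
    (∀ g : E → ℝ, Feasible N g → flowCost N f ≤ flowCost N g) ↔ NoNegCycle N f := by
  classical
  constructor
  · -- minimum cost implies no negative cycle
    intro hmin L hL
    by_contra hneg
    push_neg at hneg
    obtain ⟨hne, hok, hch, hclosed⟩ := hL
    have hLfin : L.toFinset.Nonempty := by
      cases L with
      | nil => exact absurd rfl hne
      | cons a L => exact ⟨a, by simp⟩
    -- residual slack of each step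
    set slack : E ⊕ E → ℝ := fun s =>
      match s with
      | Sum.inl e => if h : N.cap e = ⊤ then 1 else (N.cap e).untop h - f e
      | Sum.inr e => f e - N.low e with hslack
    have hslack_pos : ∀ s ∈ L, 0 < slack s := by
      intro s hs
      have := hok s hs
      cases s with
      | inl e =>
        simp only [StepOk, Sum.elim_inl] at this
        simp only [hslack]
        split_ifs with h
        · norm_num
        · have : (f e : WithTop ℝ) < ((N.cap e).untop h : WithTop ℝ) := by
            rwa [WithTop.coe_untop]
          rw [WithTop.coe_lt_coe] at this
          linarith
      | inr e =>
        simp only [StepOk, Sum.elim_inr] at this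
        simp only [hslack]
        linarith
    set m : ℝ := (L.length : ℝ) with hm
    have hm_pos : 0 < m := by
      rw [hm]
      exact_mod_cast List.length_pos_iff.mpr hne
    set ε : ℝ := (L.toFinset.inf' hLfin slack) / m with hε
    have hε_pos : 0 < ε := by
      apply div_pos _ hm_pos
      obtain ⟨s, hsmem, hseq⟩ := Finset.exists_mem_eq_inf' hLfin slack
      rw [hseq]
      exact hslack_pos s (List.mem_toFinset.mp hsmem)
    have hε_le : ∀ s ∈ L, ε * m ≤ slack s := by
      intro s hs
      rw [hε, div_mul_cancel₀ _ (ne_of_gt hm_pos)]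
      exact Finset.inf'_le _ (List.mem_toFinset.mpr hs)
    -- counts are bounded by the length
    have hcount_le : ∀ s : E ⊕ E, (cnt s L : ℝ) ≤ m := by
      intro s
      rw [hm]
      exact_mod_cast cnt_le_length s L
    have hchi_abs : ∀ e, |chi L e| ≤ m := by
      intro e
      rw [chi, abs_sub_le_iff]
      constructor
      · have := hcount_le (Sum.inl e)
        have h2 : (0:ℝ) ≤ (cnt (Sum.inr e) L : ℝ) := Nat.cast_nonneg _
        linarith
      · have := hcount_le (Sum.inr e)
        have h2 : (0:ℝ) ≤ (cnt (Sum.inl e) L : ℝ) := Nat.cast_nonneg _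
        linarith
    set g : E → ℝ := fun e => f e + ε * chi L e with hg
    have hgfeas : Feasible N g := by
      constructor
      · intro e
        constructor
        · -- lower bound
          rcases le_or_gt 0 (chi L e) with h | h
          · have : N.low e ≤ f e := (hf.1 e).1
            have : 0 ≤ ε * chi L e := mul_nonneg hε_pos.le h
            simp only [hg]; linarith
          · have hmem : Sum.inr e ∈ L := by
              by_contra hmem
              rw [chi, cnt_eq_zero_of_not_mem hmem] at h
              have : (0:ℝ) ≤ (cnt (Sum.inl e) L : ℝ) := Nat.cast_nonneg _
              simp at h
              linarith
            have hs := hε_le _ hmem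
            simp only [hslack] at hs
            have habs := hchi_abs e
            have h1 : ε * chi L e ≥ -(ε * m) := by
              have : -m ≤ chi L e := by
                rw [abs_le] at habs; exact habs.1
              nlinarith
            simp only [hg]
            linarith
        · -- upper bound
          rcases le_or_gt (chi L e) 0 with h | h
          · have h2 : (g e : WithTop ℝ) ≤ (f e : WithTop ℝ) := by
              rw [WithTop.coe_le_coe]
              have : ε * chi L e ≤ 0 := mul_nonpos_of_nonneg_of_nonpos hε_pos.le h
              simp only [hg]; linarith
            exact le_trans h2 (hf.1 e).2
          · have hmem : Sum.inl e ∈ L := by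
              by_contra hmem
              rw [chi, cnt_eq_zero_of_not_mem hmem] at h
              have : (0:ℝ) ≤ (cnt (Sum.inr e) L : ℝ) := Nat.cast_nonneg _
              simp at h
              linarith
            have hokk := hok _ hmem
            simp only [StepOk, Sum.elim_inl] at hokk
            by_cases hc : N.cap e = ⊤
            · rw [hc]; exact le_top
            · have hs := hε_le _ hmem
              simp only [hslack] at hs
              rw [dif_neg hc] at hs
              have habs := hchi_abs e
              have h1 : ε * chi L e ≤ ε * m := by
                have : chi L e ≤ m := by rw [abs_le] at habs; exact habs.2
                nlinarith
              have h2 : g e ≤ (N.cap e).untop hc := by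
                simp only [hg]; linarith
              have := WithTop.coe_le_coe.mpr h2
              rwa [WithTop.coe_untop] at this
      · intro v
        have h1 : outflow N g v = outflow N f v + ε * outflow N (chi L) v :=
          outflow_add_smul N ε f (chi L) v
        have h2 : inflow N g v = inflow N f v + ε * inflow N (chi L) v :=
          inflow_add_smul N ε f (chi L) v
        rw [h1, h2, chi_div N L hne hch hclosed v]
        have := hf.2 v
        linarith
    have hcostg : flowCost N g = flowCost N f + ε * listCost N L := by
      rw [flowCost, flowCost, ← chi_cost N L, Finset.mul_sum, ← Finset.sum_add_distrib]
      refine Finset.sum_congr rfl fun e _ => ?_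
      simp only [hg]
      ring
    have := hmin g hgfeas
    rw [hcostg] at this
    nlinarith
  · -- no negative cycle implies minimum cost
    intro hnn g hg
    set d : E → ℝ := fun e => g e - f e with hd
    have hkey := circ_cost_nonneg N f hnn
      ((Finset.univ.filter fun e => d e ≠ 0).card) d le_rfl
      (fun e => by
        constructor
        · intro h
          have h1 : f e < g e := by simp only [hd] at h; linarith
          have h2 : (g e : WithTop ℝ) ≤ N.cap e := (hg.1 e).2
          exact lt_of_lt_of_le (WithTop.coe_lt_coe.mpr h1) h2
        · intro h
          have h1 : g e < f e := by simp only [hd] at h; linarith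
          have h2 : N.low e ≤ g e := (hg.1 e).1
          linarith)
      (fun v => by
        have h1 : outflow N d v = outflow N g v - outflow N f v := by
          simp only [hd, outflow, ← Finset.sum_sub_distrib]
          refine Finset.sum_congr rfl fun e _ => ?_
          split_ifs <;> ring
        have h2 : inflow N d v = inflow N g v - inflow N f v := by
          simp only [hd, inflow, ← Finset.sum_sub_distrib]
          refine Finset.sum_congr rfl fun e _ => ?_
          split_ifs <;> ring
        have hfv := hf.2 v
        have hgv := hg.2 v
        rw [h1, h2]
        linarith)
    have hsplit : ∑ e, N.cost e * d e = flowCost N g - flowCost N f := by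
      rw [flowCost, flowCost, ← Finset.sum_sub_distrib]
      refine Finset.sum_congr rfl fun e _ => ?_
      simp only [hd]
      ring
    rw [hsplit] at hkey
    linarith
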